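/- arXiv:1806.00739 — 3 statements merged into one kernel-verified Lean document; each statement's English description precedes it below -/
import Mathlib

section
/- For every ratio α > 0, every threshold λ > 0 and every pair of distributions (P1,P2) on a finite alphabet X, Gutman's test with threshold λ satisfies liminf_{n→∞} −(1/n)·log β1(φ_n^Gut|P1,P2) ≥ λ and liminf_{n→∞} −(1/n)·log β2(φ_n^Gut|P1,P2) ≥ F(P1,P2,α,λ). -/
open Filter Topology MeasureTheory

namespace Classification

variable {X : Type*} [Fintype X] [DecidableEq X]

/-- `P` is a probability mass function on the finite alphabet `X`. -/
def IsDist (P : X → ℝ) : Prop := (∀ x, 0 ≤ P x) ∧ ∑ x, P x = 1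

/-- `P` has full support. -/
def FullSupport (P : X → ℝ) : Prop := ∀ x, 0 < P x

/-- Empirical distribution (type) of a sequence `x : Fin m → X`. -/
noncomputable def empDist {m : ℕ} (x : Fin m → X) : X → ℝ :=
  fun a => ((Finset.univ.filter fun i => x i = a).card : ℝ) / m

/-- Real-valued KL divergence with the usual `0 · log 0 = 0` convention. -/
noncomputable def klDivR (Q P : X → ℝ) : ℝ := ∑ x, Q x * Real.log (Q x / P x)

open Classical in
/-- Extended-real-valued KL divergence: `⊤` when `Q` is not absolutely continuous w.r.t. `P`. -/
noncomputable def klDivE (Q P : X → ℝ) : EReal :=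
  if ∀ x, P x = 0 → Q x = 0 then ((klDivR Q P : ℝ) : EReal) else ⊤

/-- The mixture `(α P1 + P2) / (1 + α)`. -/
noncomputable def mix (P1 P2 : X → ℝ) (α : ℝ) : X → ℝ :=
  fun x => (α * P1 x + P2 x) / (1 + α)

/-- Generalized Jensen–Shannon divergence
`GJS(P1,P2,α) = α D(P1 ‖ (αP1+P2)/(1+α)) + D(P2 ‖ (αP1+P2)/(1+α))`. -/
noncomputable def GJS (P1 P2 : X → ℝ) (α : ℝ) : ℝ :=
  α * klDivR P1 (mix P1 P2 α) + klDivR P2 (mix P1 P2 α)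

/-- Training sequence length `N = ⌈α n⌉`. -/
noncomputable def trainLen (α : ℝ) (n : ℕ) : ℕ := ⌈α * (n : ℝ)⌉₊

/-- Probability of observing the sequence `x` under i.i.d. sampling from `P`. -/
noncomputable def seqProb (P : X → ℝ) {m : ℕ} (x : Fin m → X) : ℝ := ∏ i, P (x i)

/-- A binary classification test: output `true` means "declare H₂",
`false` means "declare H₁". -/
abbrev BTest (X : Type*) (α : ℝ) (n : ℕ) : Type _ :=
  (Fin (trainLen α n) → X) → (Fin (trainLen α n) → X) → (Fin n → X) → Bool

/-- Type-I error probability: probability of declaring `H₂` when `Y^n ~ P1` (hypothesis H₁). -/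
noncomputable def beta1 {α : ℝ} {n : ℕ} (φ : BTest X α n) (P1 P2 : X → ℝ) : ℝ :=
  ∑ x1 : Fin (trainLen α n) → X, ∑ x2 : Fin (trainLen α n) → X, ∑ y : Fin n → X,
    if φ x1 x2 y = true then seqProb P1 x1 * seqProb P2 x2 * seqProb P1 y else 0

/-- Type-II error probability: probability of declaring `H₁` when `Y^n ~ P2` (hypothesis H₂). -/
noncomputable def beta2 {α : ℝ} {n : ℕ} (φ : BTest X α n) (P1 P2 : X → ℝ) : ℝ :=
  ∑ x1 : Fin (trainLen α n) → X, ∑ x2 : Fin (trainLen α n) → X, ∑ y : Fin n → X,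
    if φ x1 x2 y = false then seqProb P1 x1 * seqProb P2 x2 * seqProb P2 y else 0

open Classical in
/-- Gutman's test with threshold `lam`: declare `H₁` iff `GJS(T̂_{x₁}, T̂_y, α) ≤ lam`. -/
noncomputable def gutman (α lam : ℝ) (n : ℕ) : BTest X α n :=
  fun x1 _ y => if GJS (empDist x1) (empDist y) α ≤ lam then false else true

open Classical in
/-- `- log x` as an extended real, with `⊤` at `x = 0`. -/
noncomputable def negLogE (x : ℝ) : EReal :=
  if x = 0 then ⊤ else ((-Real.log x : ℝ) : EReal)

/-- Gutman's exponent function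
`F(P1,P2,α,lam) = min { α D(Q1‖P1) + D(Q2‖P2) : GJS(Q1,Q2,α) ≤ lam }` (as an inf in `EReal`). -/
noncomputable def Fexp (P1 P2 : X → ℝ) (α lam : ℝ) : EReal :=
  sInf {v : EReal | ∃ Q1 Q2 : X → ℝ, IsDist Q1 ∧ IsDist Q2 ∧ GJS Q1 Q2 α ≤ lam ∧
    v = (α : EReal) * klDivE Q1 P1 + klDivE Q2 P2}

/-- Expectation of `f` under `P`. -/
noncomputable def expect (P : X → ℝ) (f : X → ℝ) : ℝ := ∑ x, P x * f x

/-- Variance of `f` under `P`. -/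
noncomputable def varD (P : X → ℝ) (f : X → ℝ) : ℝ :=
  expect P (fun x => (f x - expect P f) ^ 2)

/-- Information density `ı₁(x) = log((1+α) P1(x) / (α P1(x) + P2(x)))`. -/
noncomputable def iDens1 (P1 P2 : X → ℝ) (α : ℝ) (x : X) : ℝ :=
  Real.log ((1 + α) * P1 x / (α * P1 x + P2 x))

/-- Information density `ı₂(x) = log((1+α) P2(x) / (α P1(x) + P2(x)))`. -/
noncomputable def iDens2 (P1 P2 : X → ℝ) (α : ℝ) (x : X) : ℝ :=
  Real.log ((1 + α) * P2 x / (α * P1 x + P2 x))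

/-- The dispersion `V(P1,P2,α) = α Var_{P1}[ı₁] + Var_{P2}[ı₂]`. -/
noncomputable def disp (P1 P2 : X → ℝ) (α : ℝ) : ℝ :=
  α * varD P1 (iDens1 P1 P2 α) + varD P2 (iDens2 P1 P2 α)

/-- The standard Gaussian cumulative distribution function `Φ`. -/
noncomputable def stdCDF (x : ℝ) : ℝ :=
  (Real.sqrt (2 * Real.pi))⁻¹ * ∫ t in Set.Iic x, Real.exp (-t ^ 2 / 2)

/-- The inverse standard Gaussian cdf `Φ⁻¹`. -/
noncomputable def stdCDFInv (p : ℝ) : ℝ := sInf {x : ℝ | p ≤ stdCDF x}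

/-- The non-asymptotic fundamental limit `λ*(n, α, ε | P1, P2)` for binary classification. -/
noncomputable def lamStar (α : ℝ) (n : ℕ) (ε : ℝ) (P1 P2 : X → ℝ) : ℝ :=
  sSup {lam : ℝ | 0 ≤ lam ∧ ∃ φ : BTest X α n,
    (∀ Q1 Q2 : X → ℝ, IsDist Q1 → IsDist Q2 →
      beta1 φ Q1 Q2 ≤ Real.exp (-((n : ℝ) * lam))) ∧
    beta2 φ P1 P2 ≤ ε}

/-- Rényi divergence of order `γ`. -/
noncomputable def renyi (γ : ℝ) (P1 P2 : X → ℝ) : ℝ :=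
  (1 / (γ - 1)) * Real.log (∑ x, P1 x ^ γ * P2 x ^ (1 - γ))

/-- The fundamental limit `τ*(n, α, ε | φ_n^Gut, P1, P2)` in the dual setting for Gutman's test. -/
noncomputable def tauStarGut (α : ℝ) (n : ℕ) (ε : ℝ) (P1 P2 : X → ℝ) : ℝ :=
  sSup {τ : ℝ | 0 ≤ τ ∧ ∃ lam : ℝ, 0 ≤ lam ∧
    (∀ Q1 Q2 : X → ℝ, IsDist Q1 → IsDist Q2 →
      beta1 (gutman α lam n) Q1 Q2 ≤ ε) ∧
    beta2 (gutman α lam n) P1 P2 ≤ Real.exp (-((n : ℝ) * τ))}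

/-- A two-sample homogeneity test: `true` means "declare H₂" (different distributions). -/
abbrev TTest (X : Type*) (α : ℝ) (n : ℕ) : Type _ :=
  (Fin (trainLen α n) → X) → (Fin n → X) → Bool

/-- False-alarm probability of a two-sample test. -/
noncomputable def betaFA {α : ℝ} {n : ℕ} (φ : TTest X α n) (P1 : X → ℝ) : ℝ :=
  ∑ x : Fin (trainLen α n) → X, ∑ y : Fin n → X,
    if φ x y = true then seqProb P1 x * seqProb P1 y else 0

/-- Miss-detection probability of a two-sample test. -/
noncomputable def betaMD {α : ℝ} {n : ℕ} (φ : TTest X α n) (P1 P2 : X → ℝ) : ℝ :=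
  ∑ x : Fin (trainLen α n) → X, ∑ y : Fin n → X,
    if φ x y = false then seqProb P1 x * seqProb P2 y else 0

/-- The fundamental limit `ξ*(n, α, ε | P1, P2)` for two-sample homogeneity testing. -/
noncomputable def xiStar (α : ℝ) (n : ℕ) (ε : ℝ) (P1 P2 : X → ℝ) : ℝ :=
  sSup {lam : ℝ | 0 ≤ lam ∧ ∃ φ : TTest X α n,
    (∀ Q1 : X → ℝ, IsDist Q1 → betaFA φ Q1 ≤ Real.exp (-((n : ℝ) * lam))) ∧
    betaMD φ P1 P2 ≤ ε}

/-- An M-ary classification test with the rejection option: `some j` means "declare H_j",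
`none` means "reject". -/
abbrev MTest (X : Type*) (M : ℕ) (α : ℝ) (n : ℕ) : Type _ :=
  (Fin M → Fin (trainLen α n) → X) → (Fin n → X) → Option (Fin M)

/-- Type-`j` error probability: probability of declaring some hypothesis other than
`H_j` or rejection, under `H_j`. -/
noncomputable def betaM {M : ℕ} {α : ℝ} {n : ℕ} (ψ : MTest X M α n)
    (P : Fin M → X → ℝ) (j : Fin M) : ℝ :=
  ∑ xs : Fin M → Fin (trainLen α n) → X, ∑ y : Fin n → X,
    if ψ xs y ≠ some j ∧ ψ xs y ≠ none then
      (∏ i, seqProb (P i) (xs i)) * seqProb (P j) y else 0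

/-- Type-`j` rejection probability: probability of rejecting under `H_j`. -/
noncomputable def zetaM {M : ℕ} {α : ℝ} {n : ℕ} (ψ : MTest X M α n)
    (P : Fin M → X → ℝ) (j : Fin M) : ℝ :=
  ∑ xs : Fin M → Fin (trainLen α n) → X, ∑ y : Fin n → X,
    if ψ xs y = none then (∏ i, seqProb (P i) (xs i)) * seqProb (P j) y else 0

/-- The fundamental limit `λ*(n, α, ε | P)` for M-ary classification with rejection. -/
noncomputable def lamStarM (M : ℕ) (α : ℝ) (n : ℕ) (ε : Fin M → ℝ)
    (P : Fin M → X → ℝ) : ℝ :=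
  sSup {lam : ℝ | 0 ≤ lam ∧ ∃ ψ : MTest X M α n,
    (∀ Q : Fin M → X → ℝ, (∀ i, IsDist (Q i)) → ∀ j,
      betaM ψ Q j ≤ Real.exp (-((n : ℝ) * lam))) ∧
    (∀ j, zetaM ψ P j ≤ ε j)}

open Classical in
/-- Gutman's M-ary test with rejection and threshold `lam`. -/
noncomputable def gutmanM (M : ℕ) [NeZero M] (α lam : ℝ) (n : ℕ) : MTest X M α n :=
  fun xs y =>
    if ∃ i k : Fin M, i ≠ k ∧ GJS (empDist (xs i)) (empDist y) α ≤ lam ∧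
        GJS (empDist (xs k)) (empDist y) α ≤ lam then none
    else if h : ∃ j : Fin M, GJS (empDist (xs j)) (empDist y) α ≤ lam then some h.choose
    else some 0

/-- The fundamental limit `τ*(n, α, ε | Ψ_n^Gut, P)` in the dual setting for
Gutman's M-ary test. -/
noncomputable def tauStarGutM (M : ℕ) [NeZero M] (α : ℝ) (n : ℕ) (ε : ℝ)
    (P : Fin M → X → ℝ) : ℝ :=
  sSup {τ : ℝ | 0 ≤ τ ∧ ∃ lam : ℝ, 0 ≤ lam ∧
    (∀ Q : Fin M → X → ℝ, (∀ i, IsDist (Q i)) → ∀ j,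
      betaM (gutmanM M α lam n) Q j ≤ ε) ∧
    (∀ j, zetaM (gutmanM M α lam n) P j ≤ Real.exp (-((n : ℝ) * τ)))}

/-- Generalized divergence of three distributions
`D_γ(P1,P2,P3) = (γ-1)⁻¹ log Σ_x P1(x)^{1-γ} P2(x)^{γ/2} P3(x)^{γ/2}`. -/
noncomputable def genDiv (γ : ℝ) (P1 P2 P3 : X → ℝ) : ℝ :=
  (1 / (γ - 1)) * Real.log (∑ x, P1 x ^ (1 - γ) * P2 x ^ (γ / 2) * P3 x ^ (γ / 2))

/-- A binary classification test with the rejection option: `some 0` means "declare H₁",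
`some 1` means "declare H₂", `none` means "reject". -/
abbrev RTest (X : Type*) (α : ℝ) (n : ℕ) : Type _ :=
  (Fin (trainLen α n) → X) → (Fin (trainLen α n) → X) → (Fin n → X) → Option (Fin 2)

/-- Type-1 error probability of a rejection test: declare `H₂` under `H₁`. -/
noncomputable def beta1R {α : ℝ} {n : ℕ} (ψ : RTest X α n) (P1 P2 : X → ℝ) : ℝ :=
  ∑ x1 : Fin (trainLen α n) → X, ∑ x2 : Fin (trainLen α n) → X, ∑ y : Fin n → X,
    if ψ x1 x2 y = some 1 then seqProb P1 x1 * seqProb P2 x2 * seqProb P1 y else 0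

/-- Type-2 error probability of a rejection test: declare `H₁` under `H₂`. -/
noncomputable def beta2R {α : ℝ} {n : ℕ} (ψ : RTest X α n) (P1 P2 : X → ℝ) : ℝ :=
  ∑ x1 : Fin (trainLen α n) → X, ∑ x2 : Fin (trainLen α n) → X, ∑ y : Fin n → X,
    if ψ x1 x2 y = some 0 then seqProb P1 x1 * seqProb P2 x2 * seqProb P2 y else 0

open Classical in
/-- Type-`j` rejection probability of a binary rejection test. -/
noncomputable def zetaR {α : ℝ} {n : ℕ} (ψ : RTest X α n) (P1 P2 : X → ℝ) (j : Fin 2) : ℝ :=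
  ∑ x1 : Fin (trainLen α n) → X, ∑ x2 : Fin (trainLen α n) → X, ∑ y : Fin n → X,
    if ψ x1 x2 y = none then
      seqProb P1 x1 * seqProb P2 x2 * seqProb (if j = 0 then P1 else P2) y else 0

/-- A binary test is type-based if it depends on the data only through the
triple of empirical distributions. -/
def TypeBasedB {α : ℝ} {n : ℕ} (φ : BTest X α n) : Prop :=
  ∀ x1 x1' x2 x2' : Fin (trainLen α n) → X, ∀ y y' : Fin n → X,
    empDist x1 = empDist x1' → empDist x2 = empDist x2' → empDist y = empDist y' →
      φ x1 x2 y = φ x1' x2' y'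

/-- An M-ary test is type-based if it depends on the data only through the
tuple of empirical distributions. -/
def TypeBasedM {M : ℕ} {α : ℝ} {n : ℕ} (ψ : MTest X M α n) : Prop :=
  ∀ xs xs' : Fin M → Fin (trainLen α n) → X, ∀ y y' : Fin n → X,
    (∀ i, empDist (xs i) = empDist (xs' i)) → empDist y = empDist y' →
      ψ xs y = ψ xs' y'

open Classical in
/-- Probability of an event under hypothesis `H₂` in the binary setup. -/
noncomputable def prH2E (α : ℝ) (n : ℕ) (P1 P2 : X → ℝ)
    (E : (Fin (trainLen α n) → X) → (Fin (trainLen α n) → X) → (Fin n → X) → Prop) : ℝ :=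
  ∑ x1 : Fin (trainLen α n) → X, ∑ x2 : Fin (trainLen α n) → X, ∑ y : Fin n → X,
    if E x1 x2 y then seqProb P1 x1 * seqProb P2 x2 * seqProb P2 y else 0

open Classical in
/-- Probability of an event under hypothesis `H_j` in the M-ary setup. -/
noncomputable def prHjM (M : ℕ) (α : ℝ) (n : ℕ) (P : Fin M → X → ℝ) (j : Fin M)
    (E : (Fin M → Fin (trainLen α n) → X) → (Fin n → X) → Prop) : ℝ :=
  ∑ xs : Fin M → Fin (trainLen α n) → X, ∑ y : Fin n → X,
    if E xs y then (∏ i, seqProb (P i) (xs i)) * seqProb (P j) y else 0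

/-- `η_n(α) = |X| log(n+1)/n + 2|X| log(1+αn)/(αn)`. -/
noncomputable def etaN (X : Type*) [Fintype X] (α : ℝ) (n : ℕ) : ℝ :=
  (Fintype.card X : ℝ) * Real.log ((n : ℝ) + 1) / n +
    2 * (Fintype.card X : ℝ) * Real.log (1 + α * n) / (α * n)

/-- `η_{n,M} = M |X| log(nα+1)/(nα) + |X| log(n+1)/n`. -/
noncomputable def etaNM (X : Type*) [Fintype X] (M : ℕ) (α : ℝ) (n : ℕ) : ℝ :=
  (M : ℝ) * (Fintype.card X : ℝ) * Real.log ((n : ℝ) * α + 1) / ((n : ℝ) * α) +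
    (Fintype.card X : ℝ) * Real.log ((n : ℝ) + 1) / n

/-- `Q` is an `m`-type: the empirical distribution of some sequence of length `m`. -/
def IsTypeDist (m : ℕ) (Q : X → ℝ) : Prop := ∃ x : Fin m → X, empDist x = Q

/-- The type-restricted exponent function `F_n`. -/
noncomputable def Fn (n : ℕ) (P1 P2 : X → ℝ) (α lam : ℝ) : ℝ :=
  sInf {v : ℝ | ∃ Q1 Q2 : X → ℝ, IsTypeDist (trainLen α n) Q1 ∧ IsTypeDist n Q2 ∧
    GJS Q1 Q2 α ≤ lam ∧ v = α * klDivR Q1 P1 + klDivR Q2 P2}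

/-- The second smallest value of a finite family of reals:
`min_{i ≠ j} max (v i) (v j)`. -/
noncomputable def secondMin {M : ℕ} (v : Fin M → ℝ) : ℝ :=
  sInf {t : ℝ | ∃ i j : Fin M, i ≠ j ∧ t = max (v i) (v j)}

/-- The tilted distribution `P^{(γ)}` with `γ = α/(1+α)`. -/
noncomputable def tilt (α : ℝ) (P1 P2 : X → ℝ) : X → ℝ :=
  fun x => P1 x ^ (α / (1 + α)) * P2 x ^ (1 / (1 + α)) /
    ∑ a, P1 a ^ (α / (1 + α)) * P2 a ^ (1 / (1 + α))


set_option linter.unusedSectionVars false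
set_option linter.unusedVariables false
set_option maxHeartbeats 1000000

section Helpers
open Asymptotics
def cnt {m : ℕ} (x : Fin m → X) (a : X) : ℕ := (Finset.univ.filter fun i => x i = a).card

lemma cnt_le {m : ℕ} (x : Fin m → X) (a : X) : cnt x a ≤ m := by
  simpa [cnt] using Finset.card_filter_le Finset.univ (fun i => x i = a)

lemma sum_cnt {m : ℕ} (x : Fin m → X) : ∑ a, cnt x a = m := by
  have := Finset.card_eq_sum_card_fiberwise (f := x) (s := Finset.univ) (t := Finset.univ)
    (fun i _ => Finset.mem_univ _)
  simpa [cnt] using this.symm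

lemma empDist_eq {m : ℕ} (x : Fin m → X) (a : X) : empDist x a = (cnt x a : ℝ) / m := rfl

lemma empDist_nonneg {m : ℕ} (x : Fin m → X) (a : X) : 0 ≤ empDist x a := by
  rw [empDist_eq]; positivity

lemma empDist_isDist {m : ℕ} (hm : 0 < m) (x : Fin m → X) : IsDist (empDist x) := by
  refine ⟨empDist_nonneg x, ?_⟩
  have : ∑ a, ((cnt x a : ℝ) / m) = (∑ a, (cnt x a : ℝ)) / m := by
    rw [Finset.sum_div]
  rw [show (fun a => empDist x a) = fun a => ((cnt x a : ℝ)/m) from rfl] at *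
  calc ∑ a, empDist x a = (∑ a, (cnt x a : ℝ)) / m := by
        simp only [empDist_eq]; rw [Finset.sum_div]
    _ = 1 := by
        rw [← Nat.cast_sum, sum_cnt]
        field_simp

lemma seqProb_nonneg {m : ℕ} {P : X → ℝ} (hP : ∀ a, 0 ≤ P a) (x : Fin m → X) :
    0 ≤ seqProb P x := Finset.prod_nonneg fun i _ => hP _

lemma sum_seqProb {m : ℕ} (P : X → ℝ) :
    ∑ x : Fin m → X, seqProb P x = (∑ a, P a) ^ m := by
  classical
  have h := Finset.prod_univ_sum (fun _ : Fin m => (Finset.univ : Finset X))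
    (fun _ a => P a)
  simp only [Fintype.piFinset_univ] at h
  rw [show (∑ a, P a) ^ m = ∏ _i : Fin m, (∑ a, P a) by rw [Finset.prod_const, Finset.card_univ, Fintype.card_fin]]
  rw [h]
  rfl

lemma seqProb_eq_prod {m : ℕ} (P : X → ℝ) (x : Fin m → X) :
    seqProb P x = ∏ a, P a ^ cnt x a := by
  classical
  have h : seqProb P x = ∏ b ∈ Finset.image x Finset.univ, P b ^ cnt x b :=
    Finset.prod_comp P x
  rw [h]
  refine Finset.prod_subset (Finset.subset_univ _) ?_
  intro a _ ha
  have : cnt x a = 0 := by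
    rw [cnt, Finset.card_eq_zero, Finset.filter_eq_empty_iff]
    intro i _
    exact fun h => ha (Finset.mem_image.2 ⟨i, Finset.mem_univ _, h⟩)
  rw [this, pow_zero]


lemma seqProb_change {m : ℕ} (hm : 0 < m) {P : X → ℝ} (hP : ∀ a, 0 ≤ P a)
    (x : Fin m → X) (habs : ∀ a, P a = 0 → empDist x a = 0) :
    seqProb P x = Real.exp (-(m : ℝ) * klDivR (empDist x) P) * seqProb (empDist x) x := by
  classical
  have hm' : (m : ℝ) ≠ 0 := Nat.cast_ne_zero.2 hm.ne'
  have hQ : ∀ a, empDist x a = (cnt x a : ℝ) / m := fun a => rfl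
  rw [seqProb_eq_prod P x, seqProb_eq_prod (empDist x) x, klDivR]
  rw [show -(m : ℝ) * ∑ a, empDist x a * Real.log (empDist x a / P a)
      = ∑ a, -((m : ℝ) * (empDist x a * Real.log (empDist x a / P a))) by
    simp [Finset.mul_sum, neg_mul]]
  rw [Real.exp_sum, ← Finset.prod_mul_distrib]
  refine Finset.prod_congr rfl fun a _ => ?_
  by_cases h0 : cnt x a = 0
  · simp [h0, hQ a]
  · have hq : (0 : ℝ) < empDist x a := by
      rw [hQ a]; positivity
    have hp : 0 < P a := by
      rcases (hP a).lt_or_eq with h | h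
      · exact h
      · exact absurd (habs a h.symm) hq.ne'
    have hmq : (m : ℝ) * empDist x a = (cnt x a : ℝ) := by
      rw [hQ a]; field_simp
    have : -((m : ℝ) * (empDist x a * Real.log (empDist x a / P a)))
        = (cnt x a : ℝ) * Real.log (P a / empDist x a) := by
      rw [Real.log_div hp.ne' hq.ne', Real.log_div hq.ne' hp.ne', ← mul_assoc, hmq]
      ring
    rw [this, Real.exp_nat_mul, Real.exp_log (by positivity)]
    rw [← mul_pow, div_mul_cancel₀ _ hq.ne']

lemma sum_seqProb_empDist_le (m : ℕ) [Nonempty X] :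
    ∑ x : Fin m → X, seqProb (empDist x) x ≤ ((m + 1 : ℕ) : ℝ) ^ Fintype.card X := by
  classical
  -- group by count function valued in X → Fin (m+1)
  set g : (Fin m → X) → (X → Fin (m + 1)) := fun x a => ⟨cnt x a, Nat.lt_succ_of_le (cnt_le x a)⟩
  have hgroup := Finset.sum_fiberwise (Finset.univ : Finset (Fin m → X)) g
    (fun x => seqProb (empDist x) x)
  rw [← hgroup]
  have hbound : ∀ c : X → Fin (m + 1),
      ∑ x ∈ Finset.filter (fun x => g x = c) Finset.univ, seqProb (empDist x) x ≤ 1 := by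
    intro c
    rcases Finset.eq_empty_or_nonempty (Finset.filter (fun x => g x = c) Finset.univ) with h | h
    · rw [h, Finset.sum_empty]; exact zero_le_one
    · obtain ⟨x₀, hx₀⟩ := h
      have hx₀c : g x₀ = c := (Finset.mem_filter.1 hx₀).2
      set Q : X → ℝ := fun a => ((c a : ℕ) : ℝ) / m with hQdef
      have hEq : ∀ x ∈ Finset.filter (fun x => g x = c) Finset.univ, empDist x = Q := by
        intro x hx
        have hgx : g x = c := (Finset.mem_filter.1 hx).2
        funext a
        rw [empDist_eq, hQdef]
        have : cnt x a = (c a : ℕ) := by rw [← hgx]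
        rw [this]
      calc ∑ x ∈ Finset.filter (fun x => g x = c) Finset.univ, seqProb (empDist x) x
          = ∑ x ∈ Finset.filter (fun x => g x = c) Finset.univ, seqProb Q x := by
            refine Finset.sum_congr rfl fun x hx => ?_
            rw [hEq x hx]
        _ ≤ ∑ x : Fin m → X, seqProb Q x := by
            refine Finset.sum_le_sum_of_subset_of_nonneg (Finset.subset_univ _) ?_
            intro x _ _
            exact seqProb_nonneg (fun a => by rw [hQdef]; positivity) x
        _ = (∑ a, Q a) ^ m := sum_seqProb Q
        _ ≤ 1 := by
            have hsum : ∑ a, Q a = 1 ∨ m = 0 := by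
              by_cases hm : m = 0
              · exact Or.inr hm
              · left
                have hcx : ∀ a, (c a : ℕ) = cnt x₀ a := by
                  intro a; rw [← hx₀c]
                have : ∑ a, ((c a : ℕ) : ℝ) = (m : ℝ) := by
                  have h1 : ∑ a, (c a : ℕ) = m := by
                    simp only [hcx]; exact sum_cnt x₀
                  rw [← Nat.cast_sum, h1]
                rw [hQdef]
                simp only [← Finset.sum_div, this]
                field_simp
            rcases hsum with h | h
            · rw [h, one_pow]
            · rw [h, pow_zero]
  calc ∑ c : X → Fin (m+1), ∑ x ∈ Finset.filter (fun x => g x = c) Finset.univ, seqProb (empDist x) x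
      ≤ ∑ _c : X → Fin (m+1), (1:ℝ) := Finset.sum_le_sum fun c _ => hbound c
    _ = ((m + 1 : ℕ) : ℝ) ^ Fintype.card X := by
        rw [Finset.sum_const, Finset.card_univ, Fintype.card_fun, Fintype.card_fin]
        push_cast
        ring



lemma klDivR_nonneg {Q P : X → ℝ} (hQ : IsDist Q) (hP : IsDist P)
    (habs : ∀ a, P a = 0 → Q a = 0) : 0 ≤ klDivR Q P := by
  have key : ∀ a, Q a - P a ≤ Q a * Real.log (Q a / P a) := by
    intro a
    rcases (hQ.1 a).lt_or_eq with hq | hq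
    · have hp : 0 < P a := by
        rcases (hP.1 a).lt_or_eq with h | h
        · exact h
        · exact absurd (habs a h.symm) hq.ne'
      have hlog : Real.log (P a / Q a) ≤ P a / Q a - 1 :=
        Real.log_le_sub_one_of_pos (by positivity)
      have h2 : Real.log (Q a / P a) = -Real.log (P a / Q a) := by
        rw [← Real.log_inv]
        congr 1
        field_simp
      have h3 : Q a * (P a / Q a - 1) = P a - Q a := by field_simp
      have h4 : Q a * Real.log (P a / Q a) ≤ P a - Q a := by
        calc Q a * Real.log (P a / Q a) ≤ Q a * (P a / Q a - 1) :=
              mul_le_mul_of_nonneg_left hlog hq.le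
          _ = P a - Q a := h3
      rw [h2]
      linarith
    · rw [← hq]
      simp [hP.1 a]
  calc (0:ℝ) = ∑ a, (Q a - P a) := by
        rw [Finset.sum_sub_distrib, hQ.2, hP.2, sub_self]
    _ ≤ ∑ a, Q a * Real.log (Q a / P a) := Finset.sum_le_sum fun a _ => key a
    _ = klDivR Q P := rfl

lemma log_split {q r s : ℝ} (hq : 0 ≤ q) (hr : 0 < r) (hs : 0 < s) :
    q * Real.log (q / r) = q * Real.log (q / s) + q * Real.log (s / r) := by
  rcases hq.lt_or_eq with h | h
  · rw [Real.log_div h.ne' hr.ne', Real.log_div h.ne' hs.ne', Real.log_div hs.ne' hr.ne']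
    ring
  · simp [← h]

lemma gjs_le_klsum {α : ℝ} (hα : 0 < α) {Q1 Q2 P : X → ℝ}
    (hQ1 : IsDist Q1) (hQ2 : IsDist Q2) (hP : IsDist P)
    (h1 : ∀ a, P a = 0 → Q1 a = 0) (h2 : ∀ a, P a = 0 → Q2 a = 0) :
    GJS Q1 Q2 α ≤ α * klDivR Q1 P + klDivR Q2 P := by
  set M : X → ℝ := mix Q1 Q2 α with hM
  have hMval : ∀ a, M a = (α * Q1 a + Q2 a) / (1 + α) := fun a => rfl
  have hMnn : ∀ a, 0 ≤ M a := by
    intro a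
    rw [hMval]
    have := hQ1.1 a; have := hQ2.1 a
    positivity
  have hMdist : IsDist M := by
    refine ⟨hMnn, ?_⟩
    have hne : (1:ℝ) + α ≠ 0 := by positivity
    simp only [hMval, ← Finset.sum_div, Finset.sum_add_distrib, ← Finset.mul_sum, hQ1.2, hQ2.2]
    field_simp
    ring
  have hMabs : ∀ a, P a = 0 → M a = 0 := by
    intro a ha
    rw [hMval, h1 a ha, h2 a ha]
    ring
  have key : ∀ a, α * (Q1 a * Real.log (Q1 a / P a)) + Q2 a * Real.log (Q2 a / P a)
      = α * (Q1 a * Real.log (Q1 a / M a)) + Q2 a * Real.log (Q2 a / M a)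
        + (1 + α) * (M a * Real.log (M a / P a)) := by
    intro a
    by_cases h0 : Q1 a = 0 ∧ Q2 a = 0
    · have : M a = 0 := by rw [hMval, h0.1, h0.2]; ring
      simp [h0.1, h0.2, this]
    · have hMpos : 0 < M a := by
        rcases (hMnn a).lt_or_eq with h | h
        · exact h
        · exfalso
          apply h0
          have hne : (1:ℝ) + α ≠ 0 := by positivity
          have hv := hMval a
          rw [← h] at hv
          have h1a := hQ1.1 a
          have h2a := hQ2.1 a
          have hz : α * Q1 a + Q2 a = 0 := by
            field_simp at hv
            linarith [hv]
          exact ⟨by nlinarith, by nlinarith⟩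
      have hPpos : 0 < P a := by
        rcases (hP.1 a).lt_or_eq with h | h
        · exact h
        · exact absurd (hMabs a h.symm) hMpos.ne'
      have e1 := log_split (hQ1.1 a) hPpos hMpos
      have e2 := log_split (hQ2.1 a) hPpos hMpos
      have e3 : (1 + α) * M a = α * Q1 a + Q2 a := by
        rw [hMval]; field_simp
      have hsplit : (α * Q1 a + Q2 a) * Real.log (M a / P a)
          = (1 + α) * (M a * Real.log (M a / P a)) := by
        rw [← e3]; ring
      rw [e1, e2]
      linarith [hsplit]
  have hsum : α * klDivR Q1 P + klDivR Q2 P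
      = GJS Q1 Q2 α + (1 + α) * klDivR M P := by
    simp only [klDivR, GJS, Finset.mul_sum, ← hM]
    rw [← Finset.sum_add_distrib, ← Finset.sum_add_distrib, ← Finset.sum_add_distrib]
    refine Finset.sum_congr rfl fun a _ => ?_
    exact key a
  have hnn : 0 ≤ klDivR M P := klDivR_nonneg hMdist hP hMabs
  have : 0 ≤ (1 + α) * klDivR M P :=
    mul_nonneg (by linarith : (0:ℝ) ≤ 1 + α) hnn
  linarith


lemma absCont_or_zero {m : ℕ} (P : X → ℝ) (x : Fin m → X) :
    (∀ a, P a = 0 → empDist x a = 0) ∨ seqProb P x = 0 := by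
  by_cases h : ∀ a, P a = 0 → empDist x a = 0
  · exact Or.inl h
  · right
    push_neg at h
    obtain ⟨a, hPa, hxa⟩ := h
    have hc : cnt x a ≠ 0 := by
      intro h0
      exact hxa (by rw [empDist_eq, h0]; simp)
    rw [seqProb_eq_prod]
    exact Finset.prod_eq_zero (Finset.mem_univ a) (by rw [hPa]; exact zero_pow hc)

lemma nonempty_of_isDist {P : X → ℝ} (h : IsDist P) : Nonempty X := by
  by_contra hemp
  rw [not_nonempty_iff] at hemp
  have := h.2
  rw [Finset.univ_eq_empty, Finset.sum_empty] at this
  norm_num at this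

lemma trainLen_pos {α : ℝ} (hα : 0 < α) {n : ℕ} (hn : 0 < n) : 0 < trainLen α n := by
  rw [trainLen]
  have : (0:ℝ) < α * n := by positivity
  exact Nat.ceil_pos.mpr this

/-- Key per-pair bound for Gutman's test. `c` is any real number dominated by
`α D(T1‖P1) + D(T2‖P2)` whenever the pair of types satisfies the relevant condition. -/
lemma pair_bound {α : ℝ} (hα : 0 < α) {n N : ℕ} (hn : 0 < n) (hN : 0 < N)
    (hNge : α * n ≤ (N : ℝ)) {P1 P2 : X → ℝ} (h1 : IsDist P1) (h2 : IsDist P2)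
    (c : ℝ) (x1 : Fin N → X) (y : Fin n → X)
    (hc : (∀ a, P1 a = 0 → empDist x1 a = 0) → (∀ a, P2 a = 0 → empDist y a = 0) →
      c ≤ α * klDivR (empDist x1) P1 + klDivR (empDist y) P2) :
    seqProb P1 x1 * seqProb P2 y ≤
      Real.exp (-(n:ℝ) * c) * (seqProb (empDist x1) x1 * seqProb (empDist y) y) := by
  have hf1 : 0 ≤ seqProb (empDist x1) x1 := seqProb_nonneg (fun a => empDist_nonneg x1 a) x1
  have hf2 : 0 ≤ seqProb (empDist y) y := seqProb_nonneg (fun a => empDist_nonneg y a) y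
  have hRHS : 0 ≤ Real.exp (-(n:ℝ) * c) * (seqProb (empDist x1) x1 * seqProb (empDist y) y) :=
    mul_nonneg (Real.exp_nonneg _) (mul_nonneg hf1 hf2)
  rcases absCont_or_zero P1 x1 with habs1 | hz1
  · rcases absCont_or_zero P2 y with habs2 | hz2
    · have e1 := seqProb_change hN h1.1 x1 habs1
      have e2 := seqProb_change hn h2.1 y habs2
      have d1 : 0 ≤ klDivR (empDist x1) P1 :=
        klDivR_nonneg (empDist_isDist hN x1) h1 habs1
      have d2 : 0 ≤ klDivR (empDist y) P2 :=
        klDivR_nonneg (empDist_isDist hn y) h2 habs2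
      have hcc := hc habs1 habs2
      have hexp : Real.exp (-(N:ℝ) * klDivR (empDist x1) P1) *
          Real.exp (-(n:ℝ) * klDivR (empDist y) P2) ≤ Real.exp (-(n:ℝ) * c) := by
        rw [← Real.exp_add]
        apply Real.exp_le_exp.2
        have hN1 : α * n * klDivR (empDist x1) P1 ≤ (N:ℝ) * klDivR (empDist x1) P1 :=
          mul_le_mul_of_nonneg_right hNge d1
        have hnc : (n:ℝ) * c ≤ (n:ℝ) * (α * klDivR (empDist x1) P1 + klDivR (empDist y) P2) :=
          mul_le_mul_of_nonneg_left hcc (Nat.cast_nonneg n)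
        nlinarith [hN1, hnc]
      calc seqProb P1 x1 * seqProb P2 y
          = (Real.exp (-(N:ℝ) * klDivR (empDist x1) P1) *
              Real.exp (-(n:ℝ) * klDivR (empDist y) P2)) *
            (seqProb (empDist x1) x1 * seqProb (empDist y) y) := by
            rw [e1, e2]; ring
        _ ≤ Real.exp (-(n:ℝ) * c) * (seqProb (empDist x1) x1 * seqProb (empDist y) y) :=
            mul_le_mul_of_nonneg_right hexp (mul_nonneg hf1 hf2)
    · rw [hz2, mul_zero]; exact hRHS
  · rw [hz1, zero_mul]; exact hRHS

lemma sum_factor {n N : ℕ} (e : ℝ) (A B : (Fin N → X) → ℝ) (C : (Fin n → X) → ℝ) :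
    ∑ x1 : Fin N → X, ∑ x2 : Fin N → X, ∑ y : Fin n → X, e * (A x1 * (B x2 * C y))
      = e * ((∑ x1, A x1) * ((∑ x2, B x2) * (∑ y, C y))) := by
  simp only [← Finset.mul_sum, ← Finset.sum_mul]

/-- Common upper bound on the Gutman error sums. -/
lemma gutman_sum_le {α : ℝ} (hα : 0 < α) {n : ℕ} (hn : 0 < n)
    {P1 P2 PY : X → ℝ} (h1 : IsDist P1) (h2 : IsDist P2) (hY : IsDist PY)
    (c : ℝ) (cond : (Fin (trainLen α n) → X) → (Fin n → X) → Prop)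
    [∀ x1 y, Decidable (cond x1 y)]
    (S : ℝ)
    (hS : S = ∑ x1 : Fin (trainLen α n) → X, ∑ x2 : Fin (trainLen α n) → X,
      ∑ y : Fin n → X, if cond x1 y then
        seqProb P1 x1 * seqProb P2 x2 * seqProb PY y else 0)
    (hc : ∀ (x1 : Fin (trainLen α n) → X) (y : Fin n → X),
      cond x1 y →
      (∀ a, P1 a = 0 → empDist x1 a = 0) → (∀ a, PY a = 0 → empDist y a = 0) →
      c ≤ α * klDivR (empDist x1) P1 + klDivR (empDist y) PY) :
    S ≤ ((trainLen α n + 1 : ℕ) : ℝ) ^ Fintype.card X *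
        ((n + 1 : ℕ) : ℝ) ^ Fintype.card X * Real.exp (-(n:ℝ) * c) := by
  classical
  have hXne : Nonempty X := nonempty_of_isDist h1
  have hN : 0 < trainLen α n := trainLen_pos hα hn
  have hNge : α * n ≤ (trainLen α n : ℝ) := Nat.le_ceil _
  have step1 : S ≤ ∑ x1 : Fin (trainLen α n) → X, ∑ x2 : Fin (trainLen α n) → X, ∑ y : Fin n → X,
      Real.exp (-(n:ℝ) * c) *
        (seqProb (empDist x1) x1 * (seqProb P2 x2 * seqProb (empDist y) y)) := by
    rw [hS]
    refine Finset.sum_le_sum fun x1 _ => Finset.sum_le_sum fun x2 _ =>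
      Finset.sum_le_sum fun y _ => ?_
    have hx2 : 0 ≤ seqProb P2 x2 := seqProb_nonneg h2.1 x2
    by_cases hcd : cond x1 y
    · rw [if_pos hcd]
      have hkey := pair_bound hα hn hN hNge h1 hY c x1 y (hc x1 y hcd)
      calc seqProb P1 x1 * seqProb P2 x2 * seqProb PY y
          = (seqProb P1 x1 * seqProb PY y) * seqProb P2 x2 := by ring
        _ ≤ (Real.exp (-(n:ℝ) * c) *
              (seqProb (empDist x1) x1 * seqProb (empDist y) y)) * seqProb P2 x2 :=
            mul_le_mul_of_nonneg_right hkey hx2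
        _ = Real.exp (-(n:ℝ) * c) *
              (seqProb (empDist x1) x1 * (seqProb P2 x2 * seqProb (empDist y) y)) := by ring
    · rw [if_neg hcd]
      have hf1 : 0 ≤ seqProb (empDist x1) x1 :=
        seqProb_nonneg (fun a => empDist_nonneg x1 a) x1
      have hf2 : 0 ≤ seqProb (empDist y) y :=
        seqProb_nonneg (fun a => empDist_nonneg y a) y
      exact mul_nonneg (Real.exp_nonneg _) (mul_nonneg hf1 (mul_nonneg hx2 hf2))
  have step2 := sum_factor (X := X) (n := n) (N := trainLen α n) (Real.exp (-(n:ℝ) * c))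
    (fun x1 => seqProb (empDist x1) x1) (fun x2 => seqProb P2 x2)
    (fun y => seqProb (empDist y) y)
  have hS2 : ∑ x2 : Fin (trainLen α n) → X, seqProb P2 x2 = 1 := by
    rw [sum_seqProb, h2.2, one_pow]
  have hS1le := sum_seqProb_empDist_le (X := X) (trainLen α n)
  have hS3le := sum_seqProb_empDist_le (X := X) n
  have hS3nn : 0 ≤ ∑ y : Fin n → X, seqProb (empDist y) y :=
    Finset.sum_nonneg fun y _ => seqProb_nonneg (fun a => empDist_nonneg y a) y
  calc S ≤ _ := step1
    _ = Real.exp (-(n:ℝ) * c) * ((∑ x1 : Fin (trainLen α n) → X, seqProb (empDist x1) x1) *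
          ((∑ x2 : Fin (trainLen α n) → X, seqProb P2 x2) * (∑ y : Fin n → X, seqProb (empDist y) y))) :=
        step2
    _ ≤ Real.exp (-(n:ℝ) * c) * (((trainLen α n + 1 : ℕ) : ℝ) ^ Fintype.card X *
          (1 * ((n + 1 : ℕ) : ℝ) ^ Fintype.card X)) := by
        refine mul_le_mul_of_nonneg_left ?_ (Real.exp_nonneg _)
        rw [hS2]
        refine mul_le_mul hS1le ?_ (by rw [one_mul]; exact hS3nn) (by positivity)
        rw [one_mul, one_mul]
        exact hS3le
    _ = ((trainLen α n + 1 : ℕ) : ℝ) ^ Fintype.card X * ((n + 1 : ℕ) : ℝ) ^ Fintype.card X *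
          Real.exp (-(n:ℝ) * c) := by ring

lemma log_affine_div_tendsto (a b : ℝ) (ha : 0 < a) (hb : 0 < b) :
    Filter.Tendsto (fun x : ℝ => Real.log (a * x + b) / x) atTop (𝓝 0) := by
  have h1 : Filter.Tendsto (fun x : ℝ => a * x + b) atTop atTop :=
    Filter.tendsto_atTop_add_const_right _ b
      (Filter.Tendsto.const_mul_atTop ha Filter.tendsto_id)
  have h2 : (fun x : ℝ => Real.log (a * x + b)) =o[atTop] (fun x : ℝ => a * x + b) :=
    Real.isLittleO_log_id_atTop.comp_tendsto h1
  have h3 : (fun x : ℝ => a * x + b) =O[atTop] (fun x : ℝ => x) := by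
    apply Asymptotics.IsBigO.of_bound (a + b)
    filter_upwards [Filter.eventually_ge_atTop 1] with x hx
    rw [Real.norm_eq_abs, Real.norm_eq_abs, abs_of_nonneg (by nlinarith),
      abs_of_nonneg (by linarith)]
    nlinarith
  exact (h2.trans_isBigO h3).tendsto_div_nhds_zero

lemma log_trainLen_div_tendsto {α : ℝ} (hα : 0 < α) :
    Filter.Tendsto (fun n : ℕ => Real.log ((trainLen α n + 1 : ℕ) : ℝ) / n) atTop (𝓝 0) := by
  have hupper : Filter.Tendsto (fun n : ℕ => Real.log (α * n + 2) / n) atTop (𝓝 0) :=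
    (log_affine_div_tendsto α 2 hα two_pos).comp tendsto_natCast_atTop_atTop
  have hlower : Filter.Tendsto (fun _ : ℕ => (0:ℝ)) atTop (𝓝 0) := tendsto_const_nhds
  refine tendsto_of_tendsto_of_tendsto_of_le_of_le' hlower hupper ?_ ?_
  · filter_upwards [Filter.eventually_ge_atTop 1] with n hn
    have h1 : (1:ℝ) ≤ ((trainLen α n + 1 : ℕ) : ℝ) := by
      have : 1 ≤ trainLen α n + 1 := Nat.le_add_left 1 _
      exact_mod_cast this
    have := Real.log_nonneg h1
    positivity
  · filter_upwards [Filter.eventually_ge_atTop 1] with n hn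
    have hn' : (0:ℝ) < n := by exact_mod_cast hn
    have harg : ((trainLen α n + 1 : ℕ) : ℝ) ≤ α * n + 2 := by
      have h1 : (⌈α * (n:ℝ)⌉₊ : ℝ) < α * n + 1 := Nat.ceil_lt_add_one (by positivity)
      push_cast [trainLen]
      linarith
    have hlog := Real.log_le_log (by positivity) harg
    exact div_le_div_of_nonneg_right hlog hn'.le

lemma negLogE_pos_bot (r : ℝ) (t : ℝ) (ht : 0 ≤ t) :
    (⊥ : EReal) < ((t : ℝ) : EReal) * negLogE r := by
  rw [negLogE]
  split_ifs with h
  · rcases ht.lt_or_eq with h0 | h0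
    · rw [EReal.coe_mul_top_of_pos h0]
      exact bot_lt_top
    · rw [← h0]
      simp
  · rw [← EReal.coe_mul]
    exact EReal.bot_lt_coe _

lemma lim_aux {α : ℝ} (hα : 0 < α) (k : ℕ) (βf : ℕ → ℝ) (c : ℝ)
    (hβ : ∀ n, 0 ≤ βf n)
    (hbd : ∀ n : ℕ, 1 ≤ n → βf n ≤ ((trainLen α n + 1 : ℕ) : ℝ) ^ k *
      ((n + 1 : ℕ) : ℝ) ^ k * Real.exp (-(n:ℝ) * c))
    (b : EReal) (hb : b < (c : EReal)) :
    ∀ᶠ n : ℕ in Filter.atTop, b < (((n:ℝ)⁻¹ : ℝ) : EReal) * negLogE (βf n) := by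
  induction b with
  | bot =>
    filter_upwards with n
    exact negLogE_pos_bot (βf n) _ (by positivity)
  | top => exact absurd hb (not_top_lt)
  | coe r =>
    have hrc : r < c := EReal.coe_lt_coe_iff.mp hb
    -- the polynomial correction term tends to zero
    have T1 := log_trainLen_div_tendsto (α := α) hα
    have T2 : Filter.Tendsto (fun n : ℕ => Real.log ((n + 1 : ℕ) : ℝ) / n)
        Filter.atTop (𝓝 0) := by
      have h := (log_affine_div_tendsto 1 1 one_pos one_pos).comp
        tendsto_natCast_atTop_atTop
      refine h.congr fun n => ?_
      have : (1:ℝ) * (n:ℝ) + 1 = ((n + 1 : ℕ) : ℝ) := by push_cast; ring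
      simp only [Function.comp_apply, this]
    have L : Filter.Tendsto (fun n : ℕ =>
        ((k:ℝ) * Real.log ((trainLen α n + 1 : ℕ) : ℝ) +
          (k:ℝ) * Real.log ((n + 1 : ℕ) : ℝ)) / n) Filter.atTop (𝓝 0) := by
      have h := (T1.const_mul (k:ℝ)).add (T2.const_mul (k:ℝ))
      norm_num at h
      refine h.congr fun n => ?_
      push_cast
      ring
    have hev := L.eventually (eventually_lt_nhds (show (0:ℝ) < c - r by linarith))
    filter_upwards [hev, Filter.eventually_ge_atTop 1] with n hfn hn1
    have hn' : (0:ℝ) < n := by exact_mod_cast hn1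
    by_cases h0 : βf n = 0
    · rw [negLogE, if_pos h0, EReal.coe_mul_top_of_pos (by positivity)]
      exact EReal.coe_lt_top r
    · have hpos : 0 < βf n := (hβ n).lt_of_ne (Ne.symm h0)
      set N := trainLen α n with hN
      have hK1 : (0:ℝ) < ((N + 1 : ℕ) : ℝ) ^ k := by positivity
      have hK2 : (0:ℝ) < ((n + 1 : ℕ) : ℝ) ^ k := by positivity
      have hlog : Real.log (βf n) ≤
          (k:ℝ) * Real.log ((N + 1 : ℕ) : ℝ) + (k:ℝ) * Real.log ((n + 1 : ℕ) : ℝ)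
            + (-(n:ℝ) * c) := by
        have hb1 := Real.log_le_log hpos (hbd n hn1)
        rw [Real.log_mul (by positivity) (Real.exp_ne_zero _),
          Real.log_mul (ne_of_gt hK1) (ne_of_gt hK2), Real.log_exp,
          Real.log_pow, Real.log_pow] at hb1
        push_cast at hb1 ⊢
        linarith
      have hg : (k:ℝ) * Real.log ((N + 1 : ℕ) : ℝ) + (k:ℝ) * Real.log ((n + 1 : ℕ) : ℝ)
          < (c - r) * n := by
        have := (div_lt_iff₀ hn').mp hfn
        linarith
      have h2 : r * n < -Real.log (βf n) := by nlinarith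
      have h3 : r < (n:ℝ)⁻¹ * (-Real.log (βf n)) := by
        have := mul_lt_mul_of_pos_left h2 (inv_pos.mpr hn')
        calc r = (n:ℝ)⁻¹ * (r * n) := by field_simp
          _ < (n:ℝ)⁻¹ * (-Real.log (βf n)) := this
      rw [negLogE, if_neg h0, ← EReal.coe_mul]
      exact_mod_cast EReal.coe_lt_coe_iff.mpr h3

end Helpers

/-- Theorem 1, parts 1a and 1b, of Gutman / the paper:
Gutman's test with threshold `λ > 0` satisfies, for every pair of distributions
`(P1, P2)`, `liminf_n -(1/n) log β₁(φ_n^Gut | P1, P2) ≥ λ` and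
`liminf_n -(1/n) log β₂(φ_n^Gut | P1, P2) ≥ F(P1, P2, α, λ)`. -/
theorem gutman_exponents {X : Type*} [Fintype X] [DecidableEq X]
    (α lam : ℝ) (hα : 0 < α) (hlam : 0 < lam)
    (P1 P2 : X → ℝ) (h1 : IsDist P1) (h2 : IsDist P2) :
    (lam : EReal) ≤ Filter.liminf (fun n : ℕ =>
        (((n : ℝ)⁻¹ : ℝ) : EReal) * negLogE (beta1 (gutman α lam n) P1 P2)) Filter.atTop ∧
    Fexp P1 P2 α lam ≤ Filter.liminf (fun n : ℕ =>
        (((n : ℝ)⁻¹ : ℝ) : EReal) * negLogE (beta2 (gutman α lam n) P1 P2)) Filter.atTop := by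
  classical
  have hβ1 : ∀ n : ℕ, 0 ≤ beta1 (gutman α lam n) P1 P2 := by
    intro n
    refine Finset.sum_nonneg fun x1 _ => Finset.sum_nonneg fun x2 _ =>
      Finset.sum_nonneg fun y _ => ?_
    split_ifs
    · exact mul_nonneg (mul_nonneg (seqProb_nonneg h1.1 _) (seqProb_nonneg h2.1 _))
        (seqProb_nonneg h1.1 _)
    · exact le_refl 0
  have hβ2 : ∀ n : ℕ, 0 ≤ beta2 (gutman α lam n) P1 P2 := by
    intro n
    refine Finset.sum_nonneg fun x1 _ => Finset.sum_nonneg fun x2 _ =>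
      Finset.sum_nonneg fun y _ => ?_
    split_ifs
    · exact mul_nonneg (mul_nonneg (seqProb_nonneg h1.1 _) (seqProb_nonneg h2.1 _))
        (seqProb_nonneg h2.1 _)
    · exact le_refl 0
  constructor
  · rw [Filter.le_liminf_iff]
    intro b hb
    have hbd : ∀ n : ℕ, 1 ≤ n → beta1 (gutman α lam n) P1 P2 ≤
        ((trainLen α n + 1 : ℕ) : ℝ) ^ Fintype.card X *
          ((n + 1 : ℕ) : ℝ) ^ Fintype.card X * Real.exp (-(n:ℝ) * lam) := by
      intro n hn
      refine gutman_sum_le hα hn h1 h2 h1 lam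
        (fun x1 y => ¬ GJS (empDist x1) (empDist y) α ≤ lam) _ ?_ ?_
      · rw [beta1]
        refine Finset.sum_congr rfl fun x1 _ => Finset.sum_congr rfl fun x2 _ =>
          Finset.sum_congr rfl fun y _ => ?_
        by_cases h : GJS (empDist x1) (empDist y) α ≤ lam <;> simp [gutman, h]
      · intro x1 y hcd habs1 habs2
        have hg := gjs_le_klsum hα (empDist_isDist (trainLen_pos hα hn) x1)
          (empDist_isDist hn y) h1 habs1 habs2
        linarith [not_le.mp hcd]
    exact lim_aux hα (Fintype.card X) _ lam hβ1 hbd b hb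
  · rw [Filter.le_liminf_iff]
    intro b hb
    obtain ⟨m, hm1, hm2⟩ := exists_between hb
    induction m with
    | bot => exact absurd hm1 (not_lt_bot)
    | top => exact absurd hm2 (not_top_lt)
    | coe c =>
      have hbd : ∀ n : ℕ, 1 ≤ n → beta2 (gutman α lam n) P1 P2 ≤
          ((trainLen α n + 1 : ℕ) : ℝ) ^ Fintype.card X *
            ((n + 1 : ℕ) : ℝ) ^ Fintype.card X * Real.exp (-(n:ℝ) * c) := by
        intro n hn
        refine gutman_sum_le hα hn h1 h2 h2 c
          (fun x1 y => GJS (empDist x1) (empDist y) α ≤ lam) _ ?_ ?_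
        · rw [beta2]
          refine Finset.sum_congr rfl fun x1 _ => Finset.sum_congr rfl fun x2 _ =>
            Finset.sum_congr rfl fun y _ => ?_
          by_cases h : GJS (empDist x1) (empDist y) α ≤ lam <;> simp [gutman, h]
        · intro x1 y hcd habs1 habs2
          have hQ1 : IsDist (empDist x1) := empDist_isDist (trainLen_pos hα hn) x1
          have hQ2 : IsDist (empDist y) := empDist_isDist hn y
          have hmem : ((α : EReal) * klDivE (empDist x1) P1 + klDivE (empDist y) P2) ∈
              {v : EReal | ∃ Q1 Q2 : X → ℝ, IsDist Q1 ∧ IsDist Q2 ∧ GJS Q1 Q2 α ≤ lam ∧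
                v = (α : EReal) * klDivE Q1 P1 + klDivE Q2 P2} :=
            ⟨empDist x1, empDist y, hQ1, hQ2, hcd, rfl⟩
          have hle : Fexp P1 P2 α lam ≤
              (α : EReal) * klDivE (empDist x1) P1 + klDivE (empDist y) P2 := sInf_le hmem
          rw [klDivE, if_pos habs1, klDivE, if_pos habs2, ← EReal.coe_mul,
            ← EReal.coe_add] at hle
          have := hm2.trans_le hle
          exact (EReal.coe_lt_coe_iff.mp this).le
      exact lim_aux hα (Fintype.card X) _ c hβ2 hbd b hm1

end Classification
end

section
/- For any test ψ_n in the M-ary classification-with-rejection setting and any κ = (κ1,…,κM) ∈ [0,1]^M, let κ_min := min_{t∈[M]} κ_t and κ_+ := Σ_{t∈[M]} κ_t. Then there exists a type-based test ψ_n^T (a test whose output depends on (X1^N,…,XM^N,Y^n) only through the tuple of types (T̂_{X1^N},…,T̂_{XM^N},T̂_{Y^n})) such that for every tuple P of M distributions on X and every j ∈ [M]: β_j(ψ_n|P) ≥ κ_min·β_j(ψ_n^T|P) and ζ_j(ψ_n|P) ≥ (1−κ_+)·ζ_j(ψ_n^T|P). -/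
open Filter Topology MeasureTheory

namespace Classification

variable {X : Type*} [Fintype X] [DecidableEq X]

/-- Sequences with the same empirical distribution have the same fiber counts. -/
lemma empDist_card_eq' {X : Type*} [Fintype X] [DecidableEq X] {m : ℕ} (hm : 0 < m)
    {x x' : Fin m → X} (h : empDist x = empDist x') (a : X) :
    (Finset.univ.filter fun i => x i = a).card =
      (Finset.univ.filter fun i => x' i = a).card := by
  have h1 := congrFun h a
  unfold empDist at h1
  have hm' : (m : ℝ) ≠ 0 := Nat.cast_ne_zero.mpr hm.ne'
  field_simp at h1
  exact_mod_cast h1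

/-- `seqProb` depends on a sequence only through its empirical distribution. -/
lemma seqProb_eq_of_empDist_eq' {X : Type*} [Fintype X] [DecidableEq X]
    (P : X → ℝ) {m : ℕ} {x x' : Fin m → X} (h : empDist x = empDist x') :
    seqProb P x = seqProb P x' := by
  classical
  rcases Nat.eq_zero_or_pos m with hm | hm
  · subst hm
    have : x = x' := funext fun i => absurd i.2 (by omega)
    rw [this]
  have key : ∀ z : Fin m → X,
      seqProb P z = ∏ a : X, P a ^ (Finset.univ.filter fun i => z i = a).card := by
    intro z
    unfold seqProb
    rw [← Finset.prod_fiberwise_of_maps_to (fun i _ => Finset.mem_univ (z i))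
      (fun i => P (z i))]
    refine Finset.prod_congr rfl fun a _ => ?_
    rw [Finset.prod_congr rfl (fun i hi => by rw [(Finset.mem_filter.mp hi).2]),
      Finset.prod_const]
  rw [key x, key x']
  exact Finset.prod_congr rfl fun a _ => by rw [empDist_card_eq' hm h a]

open Classical in
/-- The fiber of data points with a given tuple of empirical distributions. -/
noncomputable def auxFib {X : Type*} [Fintype X] [DecidableEq X] (M : ℕ) (α : ℝ) (n : ℕ)
    (τ : (Fin M → X → ℝ) × (X → ℝ)) :
    Finset ((Fin M → Fin (trainLen α n) → X) × (Fin n → X)) :=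
  Finset.univ.filter fun d => (fun i => empDist (d.1 i), empDist d.2) = τ

open Classical in
/-- Number of data points in a fiber on which `ψ` outputs `o`. -/
noncomputable def auxCnt {X : Type*} [Fintype X] [DecidableEq X] {M : ℕ} {α : ℝ} {n : ℕ}
    (ψ : MTest X M α n) (τ : (Fin M → X → ℝ) × (X → ℝ)) (o : Option (Fin M)) : ℕ :=
  ((auxFib M α n τ).filter fun d => ψ d.1 d.2 = o).card

open Classical in
/-- The type-based decision rule derived from `ψ` and the thresholds `κ`. -/
noncomputable def auxG {X : Type*} [Fintype X] [DecidableEq X] {M : ℕ} {α : ℝ} {n : ℕ}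
    (ψ : MTest X M α n) (κ : Fin M → ℝ) (τ : (Fin M → X → ℝ) × (X → ℝ)) :
    Option (Fin M) :=
  if h : ∃ k : Fin M, κ k * ((auxFib M α n τ).card : ℝ) ≤ (auxCnt ψ τ (some k) : ℝ)
  then some h.choose else none

/-- Lemma 5 of the paper, M-ary version of Lemma 1: for any M-ary
test with rejection `ψ_n` and any `κ ∈ [0,1]^M` there is a type-based test `ψ_n^T`
with `β_j(ψ_n) ≥ κ_min β_j(ψ_n^T)` and `ζ_j(ψ_n) ≥ (1-κ₊) ζ_j(ψ_n^T)` for every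
tuple of distributions and every `j`. -/


theorem exists_type_based_test_M {X : Type*} [Fintype X] [DecidableEq X]
    (M : ℕ) (hM : 0 < M) (α : ℝ) (hα : 0 < α) (n : ℕ)
    (ψ : MTest X M α n) (κ : Fin M → ℝ) (hκ : ∀ t, κ t ∈ Set.Icc (0 : ℝ) 1) :
    ∃ ψT : MTest X M α n, TypeBasedM ψT ∧
      ∀ P : Fin M → X → ℝ, (∀ i, IsDist (P i)) → ∀ j : Fin M,
        sInf (Set.range κ) * betaM ψT P j ≤ betaM ψ P j ∧
        (1 - ∑ t, κ t) * zetaM ψT P j ≤ zetaM ψ P j := by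
  classical
  set N := trainLen α n with hN
  let D := (Fin M → Fin N → X) × (Fin n → X)
  let Tf : D → (Fin M → X → ℝ) × (X → ℝ) := fun d => (fun i => empDist (d.1 i), empDist d.2)
  let ψT : MTest X M α n := fun xs y => auxG ψ κ (fun i => empDist (xs i), empDist y)
  have hψT : ∀ d : D, ψT d.1 d.2 = auxG ψ κ (Tf d) := fun d => rfl
  refine ⟨ψT, ?_, ?_⟩
  · intro xs xs' y y' hx hy
    show auxG ψ κ _ = auxG ψ κ _
    congr 1
    exact Prod.ext (funext hx) hy
  intro P hP j
  set κmin := sInf (Set.range κ) with hκm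
  have hne : (Set.range κ).Nonempty := ⟨κ ⟨0, hM⟩, ⟨_, rfl⟩⟩
  have hbdd : BddBelow (Set.range κ) := (Set.finite_range κ).bddBelow
  have hκle : ∀ t, κmin ≤ κ t := fun t => csInf_le hbdd ⟨t, rfl⟩
  have hκ0 : 0 ≤ κmin := le_csInf hne (by rintro _ ⟨t, rfl⟩; exact (hκ t).1)
  let w : D → ℝ := fun d => (∏ i, seqProb (P i) (d.1 i)) * seqProb (P j) d.2
  have hsp : ∀ (i : Fin M) (m : ℕ) (z : Fin m → X), 0 ≤ seqProb (P i) z := fun i m z =>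
    Finset.prod_nonneg fun _ _ => (hP i).1 _
  have hw0 : ∀ d, 0 ≤ w d := fun d =>
    mul_nonneg (Finset.prod_nonneg fun i _ => hsp i _ _) (hsp j _ _)
  have hwconst : ∀ d d' : D, Tf d = Tf d' → w d = w d' := by
    intro d d' h
    have h1 : ∀ i, empDist (d.1 i) = empDist (d'.1 i) := fun i =>
      congrFun (congrArg Prod.fst h) i
    have h2 : empDist d.2 = empDist d'.2 := congrArg Prod.snd h
    show (∏ i, seqProb (P i) (d.1 i)) * seqProb (P j) d.2 = _
    rw [seqProb_eq_of_empDist_eq' (P j) h2]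
    exact congrArg (· * _)
      (Finset.prod_congr rfl fun i _ => seqProb_eq_of_empDist_eq' (P i) (h1 i))
  have hsum : ∀ f : D → ℝ,
      ∑ d, f d = ∑ τ ∈ Finset.univ.image Tf, ∑ d ∈ auxFib M α n τ, f d := by
    intro f
    have := Finset.sum_fiberwise_of_maps_to
      (fun d (_ : d ∈ (Finset.univ : Finset D)) =>
        Finset.mem_image_of_mem Tf (Finset.mem_univ d)) f
    rw [← this]
    rfl
  have hbeta : ∀ ψ₀ : MTest X M α n, betaM ψ₀ P j =
      ∑ d : D, if ψ₀ d.1 d.2 ≠ some j ∧ ψ₀ d.1 d.2 ≠ none then w d else 0 := by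
    intro ψ₀
    rw [betaM, Fintype.sum_prod_type]
  have hzeta : ∀ ψ₀ : MTest X M α n, zetaM ψ₀ P j =
      ∑ d : D, if ψ₀ d.1 d.2 = none then w d else 0 := by
    intro ψ₀
    rw [zetaM, Fintype.sum_prod_type]
  -- common fiber facts
  have hfib : ∀ τ ∈ Finset.univ.image Tf, ∃ d₀ ∈ auxFib M α n τ,
      (∀ d ∈ auxFib M α n τ, w d = w d₀) ∧ (∀ d ∈ auxFib M α n τ, Tf d = τ) := by
    intro τ hτ
    obtain ⟨d₀, -, hd₀⟩ := Finset.mem_image.mp hτ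
    have hmem : ∀ d : D, d ∈ auxFib M α n τ ↔ Tf d = τ := by
      intro d
      unfold auxFib
      simp only [Finset.mem_filter, Finset.mem_univ, true_and]
      exact Iff.rfl
    refine ⟨d₀, (hmem d₀).mpr hd₀, fun d hd => hwconst d d₀ (((hmem d).mp hd).trans hd₀.symm),
      fun d hd => (hmem d).mp hd⟩
  constructor
  · -- beta inequality
    rw [hbeta ψ, hbeta ψT, hsum, hsum, Finset.mul_sum]
    refine Finset.sum_le_sum fun τ hτ => ?_
    obtain ⟨d₀, hd₀F, hwF, hTF⟩ := hfib τ hτ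
    have hRnn : (0:ℝ) ≤ ∑ d ∈ auxFib M α n τ,
        if ψ d.1 d.2 ≠ some j ∧ ψ d.1 d.2 ≠ none then w d else 0 :=
      Finset.sum_nonneg fun d _ => by split; exacts [hw0 d, le_rfl]
    have e1 : (∑ d ∈ auxFib M α n τ,
        if ψT d.1 d.2 ≠ some j ∧ ψT d.1 d.2 ≠ none then w d else 0)
        = ∑ d ∈ auxFib M α n τ,
          if auxG ψ κ τ ≠ some j ∧ auxG ψ κ τ ≠ none then w d else 0 :=
      Finset.sum_congr rfl fun d hd => by rw [hψT d, hTF d hd]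
    rw [e1]
    by_cases hc : auxG ψ κ τ ≠ some j ∧ auxG ψ κ τ ≠ none
    · simp only [if_pos hc]
      have hg : ∃ k : Fin M, κ k * ((auxFib M α n τ).card : ℝ) ≤ (auxCnt ψ τ (some k) : ℝ) := by
        by_contra h
        exact hc.2 (dif_neg h)
      set k := hg.choose with hk
      have hgτ : auxG ψ κ τ = some k := dif_pos hg
      have hspec : κ k * ((auxFib M α n τ).card : ℝ) ≤ (auxCnt ψ τ (some k) : ℝ) :=
        hg.choose_spec
      have hkj : k ≠ j := fun h => hc.1 (by rw [hgτ, h])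
      have hL : (∑ d ∈ auxFib M α n τ, w d) = ((auxFib M α n τ).card : ℝ) * w d₀ := by
        rw [Finset.sum_congr rfl hwF, Finset.sum_const, nsmul_eq_mul]
      have hM1 : (∑ d ∈ auxFib M α n τ, if ψ d.1 d.2 = some k then w d else 0)
          = (auxCnt ψ τ (some k) : ℝ) * w d₀ := by
        rw [← Finset.sum_filter]
        rw [Finset.sum_congr rfl (fun d hd => hwF d (Finset.mem_of_mem_filter d hd)),
          Finset.sum_const, nsmul_eq_mul]
        rfl
      have hM2 : (∑ d ∈ auxFib M α n τ, if ψ d.1 d.2 = some k then w d else 0)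
          ≤ ∑ d ∈ auxFib M α n τ, if ψ d.1 d.2 ≠ some j ∧ ψ d.1 d.2 ≠ none then w d else 0 := by
        refine Finset.sum_le_sum fun d hd => ?_
        by_cases h : ψ d.1 d.2 = some k
        · rw [if_pos h, if_pos ⟨by simp [h, hkj], by simp [h]⟩]
        · rw [if_neg h]
          split
          exacts [hw0 d, le_rfl]
      calc κmin * ∑ d ∈ auxFib M α n τ, w d
          = (κmin * ((auxFib M α n τ).card : ℝ)) * w d₀ := by rw [hL, mul_assoc]
        _ ≤ (auxCnt ψ τ (some k) : ℝ) * w d₀ := by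
            refine mul_le_mul_of_nonneg_right ?_ (hw0 d₀)
            exact le_trans (mul_le_mul_of_nonneg_right (hκle k) (Nat.cast_nonneg _)) hspec
        _ = _ := hM1.symm
        _ ≤ _ := hM2
    · simp only [if_neg hc, Finset.sum_const_zero, mul_zero]
      exact hRnn
  · -- zeta inequality
    by_cases hκs : 1 - ∑ t, κ t ≤ 0
    · have h1 : 0 ≤ zetaM ψ P j := by
        rw [hzeta ψ]
        exact Finset.sum_nonneg fun d _ => by split; exacts [hw0 d, le_rfl]
      have h2 : 0 ≤ zetaM ψT P j := by
        rw [hzeta ψT]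
        exact Finset.sum_nonneg fun d _ => by split; exacts [hw0 d, le_rfl]
      nlinarith
    push_neg at hκs
    rw [hzeta ψ, hzeta ψT, hsum, hsum, Finset.mul_sum]
    refine Finset.sum_le_sum fun τ hτ => ?_
    obtain ⟨d₀, hd₀F, hwF, hTF⟩ := hfib τ hτ
    have hRnn : (0:ℝ) ≤ ∑ d ∈ auxFib M α n τ, if ψ d.1 d.2 = none then w d else 0 :=
      Finset.sum_nonneg fun d _ => by split; exacts [hw0 d, le_rfl]
    have e1 : (∑ d ∈ auxFib M α n τ, if ψT d.1 d.2 = none then w d else 0)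
        = ∑ d ∈ auxFib M α n τ, if auxG ψ κ τ = none then w d else 0 :=
      Finset.sum_congr rfl fun d hd => by rw [hψT d, hTF d hd]
    rw [e1]
    by_cases hg : ∃ k : Fin M, κ k * ((auxFib M α n τ).card : ℝ) ≤ (auxCnt ψ τ (some k) : ℝ)
    · have hgτ : auxG ψ κ τ = some hg.choose := dif_pos hg
      simp only [hgτ, reduceCtorEq, if_false, Finset.sum_const_zero, mul_zero]
      exact hRnn
    · have hgτ : auxG ψ κ τ = none := dif_neg hg
      push_neg at hg
      simp only [hgτ, if_pos rfl]
      have hL : (∑ d ∈ auxFib M α n τ, w d) = ((auxFib M α n τ).card : ℝ) * w d₀ := by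
        rw [Finset.sum_congr rfl hwF, Finset.sum_const, nsmul_eq_mul]
      have hR : (∑ d ∈ auxFib M α n τ, if ψ d.1 d.2 = none then w d else 0)
          = (auxCnt ψ τ none : ℝ) * w d₀ := by
        rw [← Finset.sum_filter]
        rw [Finset.sum_congr rfl (fun d hd => hwF d (Finset.mem_of_mem_filter d hd)),
          Finset.sum_const, nsmul_eq_mul]
        rfl
      have hcard : (auxFib M α n τ).card = ∑ o : Option (Fin M), auxCnt ψ τ o :=
        Finset.card_eq_sum_card_fiberwise fun d _ => Finset.mem_univ (ψ d.1 d.2)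
      have hcard' : ((auxFib M α n τ).card : ℝ)
          = (auxCnt ψ τ none : ℝ) + ∑ k : Fin M, (auxCnt ψ τ (some k) : ℝ) := by
        rw [hcard, Fintype.sum_option]
        push_cast
        ring
      have hkey : (1 - ∑ t, κ t) * ((auxFib M α n τ).card : ℝ) ≤ (auxCnt ψ τ none : ℝ) := by
        have h1 : ∑ k : Fin M, (auxCnt ψ τ (some k) : ℝ)
            ≤ ∑ k : Fin M, κ k * ((auxFib M α n τ).card : ℝ) :=
          Finset.sum_le_sum fun k _ => (hg k).le
        have h2 : ∑ k : Fin M, κ k * ((auxFib M α n τ).card : ℝ)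
            = (∑ t, κ t) * ((auxFib M α n τ).card : ℝ) := (Finset.sum_mul _ _ _).symm
        nlinarith [hcard']
      calc (1 - ∑ t, κ t) * ∑ d ∈ auxFib M α n τ, w d
          = ((1 - ∑ t, κ t) * ((auxFib M α n τ).card : ℝ)) * w d₀ := by rw [hL, mul_assoc]
        _ ≤ (auxCnt ψ τ none : ℝ) * w d₀ := mul_le_mul_of_nonneg_right hkey (hw0 d₀)
        _ = _ := hR.symm

end Classification
end

section
/- For any α > 0 and any distributions P_j, P_i, P_k with full support on a finite alphabet X: min_{Q a distribution on X} [ D(Q‖P_j) + α·D(Q‖P_i) + α·D(Q‖P_k) ] = D_{2α/(1+2α)}(P_j,P_i,P_k), where D denotes the Kullback–Leibler divergence. -/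
open Filter Topology MeasureTheory

namespace Classification

variable {X : Type*} [Fintype X] [DecidableEq X]

/-- Gibbs' inequality for the finite-alphabet KL divergence. -/
lemma gibbs_aux {X : Type*} [Fintype X] (Q R : X → ℝ)
    (hQ0 : ∀ x, 0 ≤ Q x) (hQ1 : ∑ x, Q x = 1) (hR1 : ∑ x, R x = 1)
    (hRs : ∀ x, 0 < R x) : 0 ≤ klDivR Q R := by
  have key : ∀ x, Q x - R x ≤ Q x * Real.log (Q x / R x) := by
    intro x
    rcases eq_or_lt_of_le (hQ0 x) with h | h
    · rw [← h]; simpa using (hRs x).le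
    · have hr := hRs x
      have h1 : Real.log (R x / Q x) ≤ R x / Q x - 1 :=
        Real.log_le_sub_one_of_pos (by positivity)
      have h2 : Real.log (Q x / R x) = - Real.log (R x / Q x) := by
        rw [← Real.log_inv]; congr 1; field_simp
      rw [h2]
      have h3 : Q x * (R x / Q x - 1) = R x - Q x := by field_simp
      nlinarith [h1, h.le]
  have hsum : ∑ x, (Q x - R x) ≤ klDivR Q R :=
    Finset.sum_le_sum (fun x _ => key x)
  have : ∑ x, (Q x - R x) = (0 : ℝ) := by
    rw [Finset.sum_sub_distrib, hQ1, hR1, sub_self]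
  linarith

/-- the minimization identity behind Proposition 2:
`min_Q [D(Q‖P_j) + α D(Q‖P_i) + α D(Q‖P_k)] = D_{2α/(1+2α)}(P_j,P_i,P_k)`. -/
theorem min_klDiv_eq_genDiv {X : Type*} [Fintype X] [DecidableEq X]
    (α : ℝ) (hα : 0 < α)
    (Pj Pi Pk : X → ℝ) (hj : IsDist Pj) (hi : IsDist Pi) (hk : IsDist Pk)
    (hsj : FullSupport Pj) (hsi : FullSupport Pi) (hsk : FullSupport Pk) :
    IsLeast {v : ℝ | ∃ Q : X → ℝ, IsDist Q ∧
        v = klDivR Q Pj + α * klDivR Q Pi + α * klDivR Q Pk}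
      (genDiv (2 * α / (1 + 2 * α)) Pj Pi Pk) := by
  have hne : Nonempty X := by
    by_contra h
    rw [not_nonempty_iff] at h
    have := hj.2
    simp [Finset.univ_eq_empty] at this
  have hc : (0:ℝ) < 1 + 2 * α := by linarith
  set γ : ℝ := 2 * α / (1 + 2 * α) with hγ
  have haa : (1 + 2 * α) * (1 - γ) = 1 := by
    rw [hγ]; field_simp; ring
  have hbb : (1 + 2 * α) * (γ / 2) = α := by
    rw [hγ]; field_simp
  have hg1 : 1 / (γ - 1) = -(1 + 2 * α) := by
    have hne2 : γ - 1 = -(1 / (1 + 2 * α)) := by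
      rw [hγ]; field_simp; ring
    rw [hne2]; field_simp
  set g : X → ℝ := fun x => Pj x ^ (1 - γ) * Pi x ^ (γ / 2) * Pk x ^ (γ / 2) with hgdef
  have hgpos : ∀ x, 0 < g x := fun x => by
    have := hsj x; have := hsi x; have := hsk x
    positivity
  set Z : ℝ := ∑ x, g x with hZ
  have hZpos : 0 < Z :=
    Finset.sum_pos (fun x _ => hgpos x) Finset.univ_nonempty
  set R : X → ℝ := fun x => g x / Z with hR
  have hRpos : ∀ x, 0 < R x := fun x => div_pos (hgpos x) hZpos
  have hRsum : ∑ x, R x = 1 := by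
    rw [hR]; simp only
    rw [← Finset.sum_div, ← hZ, div_self hZpos.ne']
  have hRdist : IsDist R := ⟨fun x => (hRpos x).le, hRsum⟩
  set C : ℝ := (1 / (γ - 1)) * Real.log Z with hC
  have hgen : genDiv γ Pj Pi Pk = C := rfl
  -- log of R
  have hlogR : ∀ x, Real.log (R x) =
      (1 - γ) * Real.log (Pj x) + (γ / 2) * Real.log (Pi x)
        + (γ / 2) * Real.log (Pk x) - Real.log Z := by
    intro x
    have h1 := hsj x; have h2 := hsi x; have h3 := hsk x
    rw [hR]; simp only
    rw [Real.log_div (hgpos x).ne' hZpos.ne', hgdef]; simp only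
    rw [Real.log_mul (by positivity) (by positivity),
      Real.log_mul (by positivity) (by positivity),
      Real.log_rpow (hsj x), Real.log_rpow (hsi x), Real.log_rpow (hsk x)]
  -- pointwise identity
  have ptwise : ∀ Q : X → ℝ, (∀ x, 0 ≤ Q x) → ∀ x,
      Q x * Real.log (Q x / Pj x) + α * (Q x * Real.log (Q x / Pi x))
        + α * (Q x * Real.log (Q x / Pk x))
      = (1 + 2 * α) * (Q x * Real.log (Q x / R x)) + Q x * C := by
    intro Q hQ0 x
    rcases eq_or_lt_of_le (hQ0 x) with h | h
    · rw [← h]; ring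
    · rw [Real.log_div h.ne' (hsj x).ne', Real.log_div h.ne' (hsi x).ne',
        Real.log_div h.ne' (hsk x).ne', Real.log_div h.ne' (hRpos x).ne',
        hlogR x, hC, hg1]
      linear_combination (Q x * Real.log (Pj x)) * haa
        + (Q x * (Real.log (Pi x) + Real.log (Pk x))) * hbb
  -- summed identity
  have sumId : ∀ Q : X → ℝ, IsDist Q →
      klDivR Q Pj + α * klDivR Q Pi + α * klDivR Q Pk
        = (1 + 2 * α) * klDivR Q R + C := by
    intro Q hQ
    have : klDivR Q Pj + α * klDivR Q Pi + α * klDivR Q Pk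
        = ∑ x, (Q x * Real.log (Q x / Pj x) + α * (Q x * Real.log (Q x / Pi x))
            + α * (Q x * Real.log (Q x / Pk x))) := by
      simp [klDivR, Finset.mul_sum, Finset.sum_add_distrib]
    rw [this, Finset.sum_congr rfl (fun x _ => ptwise Q hQ.1 x),
      Finset.sum_add_distrib, ← Finset.mul_sum, ← Finset.sum_mul, hQ.2, one_mul]
    rfl
  have hklRR : klDivR R R = 0 := by
    unfold klDivR
    apply Finset.sum_eq_zero
    intro x _
    rw [div_self (hRpos x).ne', Real.log_one, mul_zero]
  constructor
  · exact ⟨R, hRdist, by rw [sumId R hRdist, hklRR, hgen, mul_zero, zero_add]⟩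
  · rintro v ⟨Q, hQ, rfl⟩
    rw [sumId Q hQ, hgen]
    have hkl : 0 ≤ klDivR Q R := gibbs_aux Q R hQ.1 hQ.2 hRsum hRpos
    nlinarith

end Classification
end
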